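/- arXiv:2308.09579 — 3 statements merged into one kernel-verified Lean document; each statement's English description precedes it below -/
import Mathlib

section
/- Let k be a field and G a finite group. If M is a kG-module such that Hom_{kG}(k, M) is finite dimensional, then M has a finite-dimensional submodule M' such that Hom_{kG}(k, M/M') = 0 and all composition factors of M' are isomorphic to the trivial module k. -/
namespace Stmt7Aux

variable (k G : Type) [Field k] [Group G]

noncomputable def aug (g : G) : MonoidAlgebra k G := MonoidAlgebra.of k G g - 1

noncomputable def paug (l : List G) : MonoidAlgebra k G := (l.map (aug k G)).prod

noncomputable def W (j : ℕ) : Submodule k (MonoidAlgebra k G) :=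
  Submodule.span k { x | ∃ l : List G, l.length = j ∧ paug k G l = x }

variable {k G}

lemma paug_nil : paug k G ([] : List G) = 1 := by simp [paug]

lemma paug_cons (g : G) (l : List G) : paug k G (g :: l) = aug k G g * paug k G l := by
  simp [paug]

lemma paug_append (l₁ l₂ : List G) : paug k G (l₁ ++ l₂) = paug k G l₁ * paug k G l₂ := by
  simp [paug]

lemma paug_singleton (g : G) : paug k G [g] = aug k G g := by simp [paug]

lemma paug_mem_W (l : List G) : paug k G l ∈ W k G l.length :=
  Submodule.subset_span ⟨l, rfl, rfl⟩

lemma paug_mem_W' {j : ℕ} (l : List G) (hl : l.length = j) : paug k G l ∈ W k G j :=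
  hl ▸ paug_mem_W l

lemma aug_mul_aug (g h : G) :
    aug k G g * aug k G h = aug k G (g * h) - aug k G g - aug k G h := by
  unfold aug
  rw [map_mul]
  noncomm_ring

lemma aug_mul_of (g h : G) :
    aug k G g * MonoidAlgebra.of k G h = aug k G (g * h) - aug k G h := by
  unfold aug
  rw [map_mul]
  noncomm_ring

lemma W_succ_le {j : ℕ} (hj : 1 ≤ j) : W k G (j + 1) ≤ W k G j := by
  rw [W, Submodule.span_le]
  rintro x ⟨l, hl, rfl⟩
  rcases l with _ | ⟨g, _ | ⟨h, t⟩⟩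
  · simp at hl
  · simp at hl; omega
  · have ht : t.length + 1 = j := by simpa using hl
    have e : paug k G (g :: h :: t)
        = paug k G ((g * h) :: t) - paug k G (g :: t) - paug k G (h :: t) := by
      simp only [paug_cons, ← mul_assoc, aug_mul_aug]
      rw [sub_mul, sub_mul]
    rw [e]
    exact sub_mem (sub_mem (paug_mem_W' _ (by simpa using ht)) (paug_mem_W' _ (by simpa using ht)))
      (paug_mem_W' _ (by simpa using ht))

lemma W_le_W_one {j : ℕ} (hj : 1 ≤ j) : W k G j ≤ W k G 1 := by
  induction j, hj using Nat.le_induction with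
  | base => exact le_rfl
  | succ n hn ih => exact (W_succ_le hn).trans ih

lemma W_one_fd [Finite G] : FiniteDimensional k ↥(W k G 1) := by
  have hset : { x | ∃ l : List G, l.length = 1 ∧ paug k G l = x } = Set.range (aug k G) := by
    ext x
    constructor
    · rintro ⟨l, hl, rfl⟩
      rcases l with _ | ⟨g, _ | ⟨h, t⟩⟩
      · simp at hl
      · exact ⟨g, (paug_singleton g).symm⟩
      · simp at hl
    · rintro ⟨g, rfl⟩
      exact ⟨[g], rfl, paug_singleton g⟩
  rw [W, hset]
  exact Module.Finite.span_of_finite k (Set.finite_range _)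

lemma W_fd [Finite G] {j : ℕ} (hj : 1 ≤ j) : FiniteDimensional k ↥(W k G j) := by
  have := W_one_fd (k := k) (G := G)
  exact Submodule.finiteDimensional_of_le (W_le_W_one hj)

lemma W_mul_of {j : ℕ} (hj : 1 ≤ j) {x : MonoidAlgebra k G} (hx : x ∈ W k G j) (h : G) :
    x * MonoidAlgebra.of k G h ∈ W k G j := by
  induction hx using Submodule.span_induction with
  | mem y hy =>
    obtain ⟨l, hl, rfl⟩ := hy
    rcases l.eq_nil_or_concat with rfl | ⟨l', g, rfl⟩
    · simp at hl; omega
    · rw [List.concat_eq_append] at hl ⊢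
      have hl' : l'.length + 1 = j := by simpa using hl
      have e : paug k G (l' ++ [g]) * MonoidAlgebra.of k G h
          = paug k G (l' ++ [g * h]) - paug k G (l' ++ [h]) := by
        simp only [paug_append, paug_singleton, mul_assoc, aug_mul_of, mul_sub]
      rw [e]
      exact sub_mem (paug_mem_W' _ (by simpa using hl')) (paug_mem_W' _ (by simpa using hl'))
  | zero => simp
  | add a b _ _ ha hb => rw [add_mul]; exact add_mem ha hb
  | smul c a _ ha => rw [smul_mul_assoc]; exact Submodule.smul_mem _ _ ha

lemma W_mul {j : ℕ} (hj : 1 ≤ j) {x : MonoidAlgebra k G} (hx : x ∈ W k G j)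
    (a : MonoidAlgebra k G) : x * a ∈ W k G j := by
  induction a using MonoidAlgebra.induction_on with
  | of g => exact W_mul_of hj hx g
  | add a b ha hb => rw [mul_add]; exact add_mem ha hb
  | smul r a ha => rw [mul_smul_comm]; exact Submodule.smul_mem _ _ ha

lemma exists_stab [Finite G] : ∃ J : ℕ, 1 ≤ J ∧ W k G J = W k G (J + 1) := by
  by_contra hcon
  push_neg at hcon
  have hstrict : ∀ n : ℕ, Module.finrank k ↥(W k G (n + 1 + 1)) < Module.finrank k ↥(W k G (n + 1)) := by
    intro n
    have hle : W k G (n + 1 + 1) ≤ W k G (n + 1) := W_succ_le (by omega)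
    have hfd : FiniteDimensional k ↥(W k G (n + 1)) := W_fd (by omega)
    have hne : W k G (n + 1) ≠ W k G (n + 1 + 1) := hcon (n + 1) (by omega)
    have hlt : W k G (n + 1 + 1) < W k G (n + 1) := lt_of_le_of_ne hle (fun h => hne h.symm)
    exact Submodule.finrank_lt_finrank_of_lt hlt
  have hbound : ∀ n : ℕ, Module.finrank k ↥(W k G (n + 1)) + n ≤ Module.finrank k ↥(W k G 1) := by
    intro n
    induction n with
    | zero => simp
    | succ m ih => have := hstrict m; omega
  have := hbound (Module.finrank k ↥(W k G 1) + 1)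
  omega


lemma fd_of_ker_fd {V W' : Type} [AddCommGroup V] [Module k V] [AddCommGroup W'] [Module k W']
    [FiniteDimensional k W'] (f : V →ₗ[k] W') (h : FiniteDimensional k ↥(LinearMap.ker f)) :
    FiniteDimensional k V := by
  have h2 : FiniteDimensional k (V ⧸ LinearMap.ker f) :=
    Module.Finite.equiv f.quotKerEquivRange.symm
  rw [FiniteDimensional, ← Module.rank_lt_aleph0_iff,
    ← Submodule.rank_quotient_add_rank (LinearMap.ker f)]
  exact Cardinal.add_lt_aleph0 (Module.rank_lt_aleph0 _ _) (Module.rank_lt_aleph0 _ _)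

lemma aug_smul {N : Type} [AddCommGroup N] [Module (MonoidAlgebra k G) N] (g : G) (y : N) :
    aug k G g • y = MonoidAlgebra.of k G g • y - y := by
  rw [aug, sub_smul, one_smul]

lemma smul_of_fixed {S : Type} [AddCommGroup S] [Module (MonoidAlgebra k G) S]
    {y : S} (hy : ∀ g : G, MonoidAlgebra.of k G g • y = y) (a : MonoidAlgebra k G) :
    a • y = algebraMap k (MonoidAlgebra k G) ((MonoidAlgebra.lift k k G 1) a) • y := by
  induction a using MonoidAlgebra.induction_on with
  | of g => rw [hy g, MonoidAlgebra.lift_of]; simp [← MonoidAlgebra.one_def]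
  | add a b ha hb => rw [add_smul, ha, hb, map_add, map_add, add_smul]
  | smul r a ha =>
    rw [Algebra.smul_def, mul_smul, ha, ← mul_smul, ← map_mul]
    congr 2
    simp [smul_eq_mul]

lemma fixed_smul_fixed {S : Type} [AddCommGroup S] [Module (MonoidAlgebra k G) S]
    {y : S} (hy : ∀ g : G, MonoidAlgebra.of k G g • y = y) (a : MonoidAlgebra k G) (g : G) :
    MonoidAlgebra.of k G g • (a • y) = a • y := by
  rw [← mul_smul, smul_of_fixed hy (MonoidAlgebra.of k G g * a), smul_of_fixed hy a, map_mul,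
    MonoidAlgebra.lift_of]
  simp


variable (k G) (M : Type) [AddCommGroup M] [Module k M] [Module (MonoidAlgebra k G) M]
  [IsScalarTower k (MonoidAlgebra k G) M]

def A (j : ℕ) : Submodule k M where
  carrier := { m | ∀ x ∈ W k G j, x • m = 0 }
  add_mem' := fun {a b} ha hb x hx => by rw [smul_add, ha x hx, hb x hx, add_zero]
  zero_mem' := fun x _ => smul_zero x
  smul_mem' := fun c m hm x hx => by rw [smul_comm, hm x hx, smul_zero]

lemma mem_A {j : ℕ} {m : M} : m ∈ A k G M j ↔ ∀ x ∈ W k G j, x • m = 0 := Iff.rfl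

lemma A_mono {j : ℕ} (hj : 1 ≤ j) : A k G M j ≤ A k G M (j + 1) :=
  fun _ hm x hx => hm x (W_succ_le hj hx)

def Mprime (J : ℕ) (hJ : 1 ≤ J) : Submodule (MonoidAlgebra k G) M where
  carrier := { m | ∀ x ∈ W k G J, x • m = 0 }
  add_mem' := fun {a b} ha hb x hx => by rw [smul_add, ha x hx, hb x hx, add_zero]
  zero_mem' := fun x _ => smul_zero x
  smul_mem' := fun a m hm x hx => by rw [← mul_smul]; exact hm _ (W_mul hJ hx a)

lemma mem_Mprime {J : ℕ} {hJ : 1 ≤ J} {m : M} :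
    m ∈ Mprime k G M J hJ ↔ ∀ x ∈ W k G J, x • m = 0 := Iff.rfl

variable {k G M}

lemma A_fd [Finite G] (s : Finset M)
    (hs : ∀ m : M, (∀ g : G, MonoidAlgebra.of k G g • m = m) →
      m ∈ Submodule.span k (s : Set M)) :
    ∀ j : ℕ, 1 ≤ j → FiniteDimensional k ↥(A k G M j) := by
  intro j hj
  induction j, hj using Nat.le_induction with
  | base =>
    have hle : A k G M 1 ≤ Submodule.span k (s : Set M) := by
      intro m hm
      apply hs
      intro g
      have h0 : aug k G g • m = 0 := by
        apply hm
        have := paug_mem_W' (k := k) (G := G) [g] rfl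
        rwa [paug_singleton] at this
      rw [aug_smul] at h0
      exact sub_eq_zero.mp h0
    exact Submodule.finiteDimensional_of_le hle
  | succ j hj ih =>
    haveI := Fintype.ofFinite G
    have hmem : ∀ (f : Fin j → G) (m : ↥(A k G M (j + 1))),
        paug k G (List.ofFn f) • (m : M) ∈ Submodule.span k (s : Set M) := by
      intro f m
      apply hs
      intro g
      have h0 : paug k G (g :: List.ofFn f) • (m : M) = 0 :=
        m.2 _ (paug_mem_W' _ (by simp))
      rw [paug_cons, mul_smul, aug_smul] at h0
      exact sub_eq_zero.mp h0
    let Φ : ↥(A k G M (j + 1)) →ₗ[k] ((Fin j → G) → ↥(Submodule.span k (s : Set M))) :=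
      { toFun := fun m f => ⟨paug k G (List.ofFn f) • (m : M), hmem f m⟩
        map_add' := fun a b => by
          funext f
          apply Subtype.ext
          simp [smul_add]
        map_smul' := fun c a => by
          funext f
          apply Subtype.ext
          simp only [SetLike.val_smul, Pi.smul_apply, RingHom.id_apply]
          exact smul_comm _ _ _ }
    have hker : LinearMap.ker Φ = Submodule.comap (A k G M (j + 1)).subtype (A k G M j) := by
      ext m
      simp only [LinearMap.mem_ker, Submodule.mem_comap, Submodule.subtype_apply]
      constructor
      · intro h
        have h' : ∀ f : Fin j → G, paug k G (List.ofFn f) • (m : M) = 0 := by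
          intro f
          exact Subtype.ext_iff.mp (congrFun h f)
        have hgen : ∀ l : List G, l.length = j → paug k G l • (m : M) = 0 := by
          intro l hl
          subst hl
          have := h' l.get
          rwa [List.ofFn_get] at this
        rw [mem_A]
        intro x hx
        induction hx using Submodule.span_induction with
        | mem y hy =>
          obtain ⟨l, hl, rfl⟩ := hy
          exact hgen l hl
        | zero => rw [zero_smul]
        | add a b _ _ ha hb => rw [add_smul, ha, hb, add_zero]
        | smul c a _ ha => rw [smul_assoc, ha, smul_zero]
      · intro h
        funext f
        apply Subtype.ext
        exact h _ (paug_mem_W' _ (by simp))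
    have hkfd : FiniteDimensional k ↥(LinearMap.ker Φ) := by
      rw [hker]
      exact (Submodule.comapSubtypeEquivOfLe (A_mono k G M hj)).symm.finiteDimensional
    exact fd_of_ker_fd Φ hkfd

end Stmt7Aux


open Stmt7Aux in


/-- Let `k` be a field, `G` a finite group, and `M` a `kG`-module such that
`Hom_{kG}(k, M) ≅ M^G` is finite dimensional (encoded: the fixed points lie in the span
of finitely many vectors).  Then `M` has a finite-dimensional `kG`-submodule `M'` such
that `Hom_{kG}(k, M/M') = 0` (no nonzero fixed points in the quotient) and all
composition factors of `M'` (i.e. simple subquotients `Q/P` with `P ≤ Q ≤ M'`) carry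
the trivial `G`-action, i.e. are isomorphic to the trivial module `k`. -/
theorem stmt7 (k : Type) [Field k] (G : Type) [Group G] [Finite G]
    (M : Type) [AddCommGroup M] [Module k M] [Module (MonoidAlgebra k G) M]
    [IsScalarTower k (MonoidAlgebra k G) M]
    (hfin : ∃ s : Finset M, ∀ m : M, (∀ g : G, MonoidAlgebra.of k G g • m = m) →
      m ∈ Submodule.span k (s : Set M)) :
    ∃ M' : Submodule (MonoidAlgebra k G) M,
      FiniteDimensional k ↥(M'.restrictScalars k) ∧
      (∀ x : M ⧸ M', (∀ g : G, MonoidAlgebra.of k G g • x = x) → x = 0) ∧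
      (∀ (P Q : Submodule (MonoidAlgebra k G) M), P ≤ Q → Q ≤ M' →
        IsSimpleModule (MonoidAlgebra k G) (↥Q ⧸ P.comap Q.subtype) →
        ∀ (g : G) (x : ↥Q ⧸ P.comap Q.subtype), MonoidAlgebra.of k G g • x = x) := by

  classical
  obtain ⟨s, hs⟩ := hfin
  obtain ⟨J, hJ1, hJW⟩ := exists_stab (k := k) (G := G)
  refine ⟨Mprime k G M J hJ1, ?_, ?_, ?_⟩
  · have hAfd := A_fd s hs J hJ1
    have heq : (Mprime k G M J hJ1).restrictScalars k = A k G M J :=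
      Submodule.ext fun m => Iff.rfl
    rw [heq]
    exact hAfd
  · intro x hx
    obtain ⟨m, rfl⟩ := Submodule.Quotient.mk_surjective _ x
    have haug : ∀ g : G, aug k G g • m ∈ Mprime k G M J hJ1 := by
      intro g
      rw [aug_smul]
      have h1 := hx g
      rw [← Submodule.Quotient.mk_smul] at h1
      exact (Submodule.Quotient.eq _).mp h1
    have hm : m ∈ Mprime k G M J hJ1 := by
      rw [mem_Mprime]
      intro z hz
      rw [hJW] at hz
      induction hz using Submodule.span_induction with
      | mem y hy =>
        obtain ⟨l, hl, rfl⟩ := hy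
        rcases l.eq_nil_or_concat with rfl | ⟨l', g, rfl⟩
        · simp at hl
        · rw [List.concat_eq_append, paug_append, paug_singleton, mul_smul]
          exact (haug g) _ (paug_mem_W' l' (by simp at hl; omega))
      | zero => rw [zero_smul]
      | add a b _ _ ha hb => rw [add_smul, ha, hb, add_zero]
      | smul c a _ ha => rw [smul_assoc, ha, smul_zero]
    exact (Submodule.Quotient.mk_eq_zero _).mpr hm
  · intro P Q hPQ hQM hS g x
    haveI := hS
    have kill : ∀ z ∈ W k G J, ∀ y : ↥Q ⧸ P.comap Q.subtype, z • y = 0 := by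
      intro z hz y
      obtain ⟨q, rfl⟩ := Submodule.Quotient.mk_surjective _ y
      have hq : z • q = 0 := by
        apply Subtype.ext
        rw [Submodule.coe_smul]
        have hqm : (q : M) ∈ Mprime k G M J hJ1 := hQM q.2
        exact hqm z hz
      rw [← Submodule.Quotient.mk_smul, hq]
      rfl
    have hex : ∃ j : ℕ, ∀ l : List G, l.length = j →
        ∀ y : ↥Q ⧸ P.comap Q.subtype, paug k G l • y = 0 :=
      ⟨J, fun l hl y => kill _ (paug_mem_W' l hl) y⟩
    have hnt : Nontrivial (↥Q ⧸ P.comap Q.subtype) :=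
      IsSimpleModule.nontrivial (MonoidAlgebra k G) _
    have hspec := Nat.find_spec hex
    have hj0pos : Nat.find hex ≠ 0 := by
      intro h0
      obtain ⟨y, hy⟩ := exists_ne (0 : ↥Q ⧸ P.comap Q.subtype)
      have h1 := hspec [] (by rw [h0]; rfl) y
      rw [paug_nil, one_smul] at h1
      exact hy h1
    obtain ⟨n, hn⟩ : ∃ n, Nat.find hex = n + 1 := ⟨Nat.find hex - 1, by omega⟩
    have hmin := Nat.find_min hex (m := n) (by omega)
    push_neg at hmin
    obtain ⟨l, hl, y, hy⟩ := hmin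
    have hfix : ∀ g' : G, MonoidAlgebra.of k G g' • (paug k G l • y) = paug k G l • y := by
      intro g'
      have h0 : paug k G (g' :: l) • y = 0 := hspec _ (by simp [hl, ← hn]) y
      rw [paug_cons, mul_smul] at h0
      rw [← sub_eq_zero, ← aug_smul]
      exact h0
    let T : Submodule (MonoidAlgebra k G) (↥Q ⧸ P.comap Q.subtype) :=
      { carrier := { y | ∀ g' : G, MonoidAlgebra.of k G g' • y = y }
        add_mem' := fun {a b} ha hb g' => by rw [smul_add, ha g', hb g']
        zero_mem' := fun g' => smul_zero _
        smul_mem' := fun a y hy g' => fixed_smul_fixed hy a g' }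
    have hTtop : T = ⊤ := by
      refine (eq_bot_or_eq_top T).resolve_left ?_
      intro hT
      have hmemT : paug k G l • y ∈ T := hfix
      rw [hT, Submodule.mem_bot] at hmemT
      exact hy hmemT
    have hxT : x ∈ T := hTtop ▸ Submodule.mem_top
    exact hxT g
end

section
/- Let k be a field of characteristic 3 containing the group algebra relations for G = ℤ/3^r × Σ₃, with C = ⟨g⟩ cyclic of order 3^r and D = ⟨h, t | h³ = t² = 1, tht = h⁻¹⟩. Set Z = g - g² and Y = h - h² in kG. Then kG is generated as a k-algebra by Z, Y, t subject to the relations Z^{3^r} = 0, Y³ = 0, ZY = YZ, tZ = Zt, tY = -Yt, t² = 1. -/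
lemma aux_nil_adjoin {k A : Type} [CommRing k] [Ring A] [Algebra k A]
    (u : A) (N : ℕ) (hN : u ^ N = 0) : u ∈ Algebra.adjoin k {u + u ^ 2} := by
  suffices H : ∀ i m, N ≤ m + i → u ^ m ∈ Algebra.adjoin k {u + u ^ 2} by
    simpa using H N 1 (by omega)
  intro i
  induction i with
  | zero =>
    intro m hm
    rw [pow_eq_zero_of_le (by omega : N ≤ m) hN]
    exact zero_mem _
  | succ i ih =>
    intro m hm
    by_cases hc : N ≤ m + i
    · exact ih m hc
    rcases Nat.eq_zero_or_pos m with hm0 | hm1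
    · subst hm0; simpa using one_mem (Algebra.adjoin k {u + u ^ 2})
    have hcomm : Commute u (u ^ 2) := (Commute.refl u).pow_right 2
    have hpow := hcomm.add_pow m
    rw [Finset.sum_range_succ] at hpow
    simp only [Nat.sub_self, pow_zero, mul_one, Nat.choose_self, Nat.cast_one] at hpow
    have key : u ^ m = (u + u ^ 2) ^ m
        - ∑ j ∈ Finset.range m, u ^ j * (u ^ 2) ^ (m - j) * (m.choose j : A) := by
      rw [hpow]; abel
    rw [key]
    refine sub_mem (pow_mem (Algebra.self_mem_adjoin_singleton k _) m)
      (sum_mem fun j hj => ?_)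
    have hjm := Finset.mem_range.mp hj
    rw [← pow_mul, ← pow_add]
    exact mul_mem (ih _ (by omega)) (Subalgebra.natCast_mem _ _)

section GroupFacts

variable (r : ℕ)

local notation "P" => (Multiplicative (ZMod (3 ^ r)) × Equiv.Perm (Fin 3))

lemma aux_pg : ((Multiplicative.ofAdd (1 : ZMod (3 ^ r)), 1) : P) ^ (3 ^ r) = 1 := by
  rw [Prod.pow_mk, one_pow, ← ofAdd_nsmul]
  simp [nsmul_eq_mul, Prod.ext_iff]

lemma aux_pa (a : Multiplicative (ZMod (3 ^ r))) [NeZero (3 ^ r)] :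
    ((a, 1) : P) = ((Multiplicative.ofAdd (1 : ZMod (3 ^ r)), 1) : P)
      ^ (Multiplicative.toAdd a).val := by
  rw [Prod.pow_mk, one_pow, ← ofAdd_nsmul]
  simp [nsmul_eq_mul, ZMod.natCast_zmod_val, Prod.ext_iff]

lemma aux_ph : ((1, finRotate 3) : P) ^ 3 = 1 := by
  rw [Prod.pow_mk, one_pow]
  simp [Prod.ext_iff]
  decide

lemma aux_pgh : ((Multiplicative.ofAdd (1 : ZMod (3 ^ r)), 1) : P) * (1, finRotate 3)
    = ((1, finRotate 3) : P) * (Multiplicative.ofAdd (1 : ZMod (3 ^ r)), 1) := by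
  simp [Prod.mk_mul_mk]

lemma aux_pgt : ((Multiplicative.ofAdd (1 : ZMod (3 ^ r)), 1) : P) * (1, Equiv.swap 0 1)
    = ((1, Equiv.swap 0 1) : P) * (Multiplicative.ofAdd (1 : ZMod (3 ^ r)), 1) := by
  simp [Prod.mk_mul_mk]

lemma aux_pth : ((1, Equiv.swap 0 1) : P) * (1, finRotate 3)
    = ((1, finRotate 3) : P) * (1, finRotate 3) * (1, Equiv.swap 0 1) := by
  simp [Prod.mk_mul_mk, Prod.ext_iff]
  decide

lemma aux_pth2 : ((1, Equiv.swap 0 1) : P) * (((1, finRotate 3) : P) * (1, finRotate 3))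
    = ((1, finRotate 3) : P) * (1, Equiv.swap 0 1) := by
  simp [Prod.mk_mul_mk, Prod.ext_iff]
  decide

lemma aux_ptt : ((1, Equiv.swap 0 1) : P) * (1, Equiv.swap 0 1) = 1 := by
  simp [Prod.mk_mul_mk, Prod.ext_iff]

lemma aux_split (a : Multiplicative (ZMod (3 ^ r))) (σ : Equiv.Perm (Fin 3)) :
    ((a, σ) : P) = ((a, 1) : P) * ((1, σ) : P) := by
  simp [Prod.mk_mul_mk]

lemma aux_hh : ((1, finRotate 3 * finRotate 3) : P)
    = ((1, finRotate 3) : P) * ((1, finRotate 3) : P) := by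
  simp [Prod.mk_mul_mk]

lemma aux_ht : ((1, finRotate 3 * Equiv.swap 0 1) : P)
    = ((1, finRotate 3) : P) * ((1, Equiv.swap 0 1) : P) := by
  simp [Prod.mk_mul_mk]

lemma aux_hht : ((1, finRotate 3 * finRotate 3 * Equiv.swap 0 1) : P)
    = ((1, finRotate 3) : P) * ((1, finRotate 3) : P) * ((1, Equiv.swap 0 1) : P) := by
  simp [Prod.mk_mul_mk]

lemma aux_perm_cases (σ : Equiv.Perm (Fin 3)) :
    σ = 1 ∨ σ = finRotate 3 ∨ σ = finRotate 3 * finRotate 3 ∨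
      σ = Equiv.swap 0 1 ∨ σ = finRotate 3 * Equiv.swap 0 1 ∨
      σ = finRotate 3 * finRotate 3 * Equiv.swap 0 1 := by
  revert σ; decide

end GroupFacts

/-- Let `k` be a field of characteristic `3`, `r ≥ 1`, and
`G = ℤ/3^r × Σ₃` with `C = ⟨g⟩` cyclic of order `3^r` and `Σ₃ = ⟨h, t⟩` where `h` is a
3-cycle and `t` a transposition.  Set `Z = g - g²` and `Y = h - h²` in `kG`, and
`T = t`.  Then `kG` is generated as a `k`-algebra by `Z, Y, T`, these satisfy the
relations `Z^{3^r} = 0`, `Y³ = 0`, `ZY = YZ`, `TZ = ZT`, `TY = -YT`, `T² = 1`, and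
`kG` has dimension `6·3^r` (so these relations form a presentation of `kG`). -/
theorem stmt9 (k : Type) [Field k] [CharP k 3] (r : ℕ) (hr : 1 ≤ r) :
    let G := Multiplicative (ZMod (3 ^ r)) × Equiv.Perm (Fin 3)
    let g : G := (Multiplicative.ofAdd (1 : ZMod (3 ^ r)), 1)
    let h : G := (1, finRotate 3)
    let t : G := (1, Equiv.swap 0 1)
    let Z : MonoidAlgebra k G := MonoidAlgebra.of k G g - MonoidAlgebra.of k G (g * g)
    let Y : MonoidAlgebra k G := MonoidAlgebra.of k G h - MonoidAlgebra.of k G (h * h)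
    let T : MonoidAlgebra k G := MonoidAlgebra.of k G t
    Z ^ (3 ^ r) = 0 ∧ Y ^ 3 = 0 ∧ Z * Y = Y * Z ∧ T * Z = Z * T ∧
      T * Y = -(Y * T) ∧ T ^ 2 = 1 ∧
      Algebra.adjoin k {Z, Y, T} = (⊤ : Subalgebra k (MonoidAlgebra k G)) ∧
      Module.finrank k (MonoidAlgebra k G) = 6 * 3 ^ r := by
  intro G g h t Z Y T
  have hfact : Fact (Nat.Prime 3) := ⟨by norm_num⟩
  have hne : NeZero (3 ^ r) := ⟨pow_ne_zero _ (by norm_num)⟩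
  have hchar : CharP (MonoidAlgebra k G) 3 := charP_of_injective_algebraMap' k 3
  -- group facts, transported to G
  have hg : g ^ (3 ^ r) = 1 := aux_pg r
  have hh : h ^ 3 = 1 := aux_ph r
  have hgh : g * h = h * g := aux_pgh r
  have hgt : g * t = t * g := aux_pgt r
  have hth : t * h = h * h * t := aux_pth r
  have hth2 : t * (h * h) = h * t := aux_pth2 r
  have htt : t * t = 1 := aux_ptt r
  set A : MonoidAlgebra k G := MonoidAlgebra.of k G g with hA
  set B : MonoidAlgebra k G := MonoidAlgebra.of k G h with hB
  have hZ : Z = A - A * A := by simp [Z, hA, map_mul]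
  have hY : Y = B - B * B := by simp [Y, hB, map_mul]
  have hApow : A ^ (3 ^ r) = 1 := by rw [hA, ← map_pow, hg, map_one]
  have hBpow : B ^ 3 = 1 := by rw [hB, ← map_pow, hh, map_one]
  have rel1 : Z ^ (3 ^ r) = 0 := by
    have hcomm : Commute A (A * A) := (Commute.refl A).mul_right (Commute.refl A)
    rw [hZ, sub_pow_char_pow_of_commute 3 r hcomm, hApow, ← sq, ← pow_mul, mul_comm 2,
      pow_mul, hApow, one_pow, sub_self]
  have rel2 : Y ^ 3 = 0 := by
    have hcomm : Commute B (B * B) := (Commute.refl B).mul_right (Commute.refl B)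
    have h3 := sub_pow_char_of_commute 3 hcomm
    rw [hY, h3, hBpow, ← sq, ← pow_mul, mul_comm 2, pow_mul, hBpow, one_pow, sub_self]
  have hABc : Commute A B := by
    show A * B = B * A
    rw [hA, hB, ← map_mul, ← map_mul, hgh]
  have rel3 : Z * Y = Y * Z := by
    have : Commute Z Y := by
      rw [hZ, hY]
      exact ((hABc.sub_right (hABc.mul_right hABc)).sub_left
        (((hABc.mul_left hABc).sub_right ((hABc.mul_left hABc).mul_right
          (hABc.mul_left hABc)))))
    exact this.eq
  have hTAc : Commute T A := by
    show T * A = A * T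
    rw [hA, show T = MonoidAlgebra.of k G t from rfl, ← map_mul, ← map_mul, hgt]
  have rel4 : T * Z = Z * T := by
    rw [hZ]
    exact (hTAc.sub_right (hTAc.mul_right hTAc)).eq
  have rel5 : T * Y = -(Y * T) := by
    have e1 : T * MonoidAlgebra.of k G h = MonoidAlgebra.of k G (h * h) * T := by
      rw [show T = MonoidAlgebra.of k G t from rfl, ← map_mul, ← map_mul, hth]
    have e2 : T * MonoidAlgebra.of k G (h * h) = MonoidAlgebra.of k G h * T := by
      rw [show T = MonoidAlgebra.of k G t from rfl, ← map_mul, ← map_mul, hth2]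
    rw [show Y = MonoidAlgebra.of k G h - MonoidAlgebra.of k G (h * h) from rfl,
      mul_sub, sub_mul, e1, e2, neg_sub]
  have rel6 : T ^ 2 = 1 := by
    rw [show T = MonoidAlgebra.of k G t from rfl, sq, ← map_mul, htt, map_one]
  have rel7 : Algebra.adjoin k {Z, Y, T} = (⊤ : Subalgebra k (MonoidAlgebra k G)) := by
    set S := Algebra.adjoin k {Z, Y, T} with hS
    have hZS : Z ∈ S := Algebra.subset_adjoin (by simp)
    have hYS : Y ∈ S := Algebra.subset_adjoin (by simp)
    have hTS : T ∈ S := Algebra.subset_adjoin (by simp)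
    have hAS : A ∈ S := by
      have hu : (A - 1) ^ (3 ^ r) = 0 := by
        rw [sub_pow_char_pow_of_commute 3 r (Commute.one_right A), hApow, one_pow, sub_self]
      have hmem := aux_nil_adjoin (k := k) (A - 1) (3 ^ r) hu
      have heq : (A - 1) + (A - 1) ^ 2 = -Z := by
        rw [hZ, sq]; simp only [sub_mul, mul_sub, one_mul, mul_one]; abel
      rw [heq] at hmem
      have hle : Algebra.adjoin k {-Z} ≤ S :=
        Algebra.adjoin_le (by simpa using neg_mem hZS)
      have : A - 1 ∈ S := hle hmem
      simpa using add_mem this (one_mem S)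
    have hBS : B ∈ S := by
      have hu : (B - 1) ^ 3 = 0 := by
        rw [sub_pow_char_of_commute 3 (Commute.one_right B), hBpow, one_pow,
          sub_self]
      have hmem := aux_nil_adjoin (k := k) (B - 1) 3 hu
      have heq : (B - 1) + (B - 1) ^ 2 = -Y := by
        rw [hY, sq]; simp only [sub_mul, mul_sub, one_mul, mul_one]; abel
      rw [heq] at hmem
      have hle : Algebra.adjoin k {-Y} ≤ S :=
        Algebra.adjoin_le (by simpa using neg_mem hYS)
      have : B - 1 ∈ S := hle hmem
      simpa using add_mem this (one_mem S)
    have hof : ∀ x : G, MonoidAlgebra.of k G x ∈ S := by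
      rintro ⟨a, σ⟩
      rw [aux_split r a σ, map_mul]
      refine mul_mem ?_ ?_
      · rw [aux_pa r a, map_pow]
        exact pow_mem hAS _
      · rcases aux_perm_cases σ with rfl | rfl | rfl | rfl | rfl | rfl
        · have : ((1, (1 : Equiv.Perm (Fin 3))) : G) = 1 := rfl
          rw [this, map_one]; exact one_mem S
        · exact hBS
        · rw [aux_hh r, map_mul]; exact mul_mem hBS hBS
        · exact hTS
        · rw [aux_ht r, map_mul]; exact mul_mem hBS hTS
        · rw [aux_hht r, map_mul, map_mul]; exact mul_mem (mul_mem hBS hBS) hTS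
    rw [eq_top_iff]
    rintro x -
    exact MonoidAlgebra.induction_on x hof (fun f g hf hg => add_mem hf hg)
      (fun c f hf => Subalgebra.smul_mem S hf c)
  refine ⟨rel1, rel2, rel3, rel4, rel5, rel6, rel7, ?_⟩
  show Module.finrank k
      (MonoidAlgebra k (Multiplicative (ZMod (3 ^ r)) × Equiv.Perm (Fin 3))) = 6 * 3 ^ r
  have hfr : Module.finrank k
      ((Multiplicative (ZMod (3 ^ r)) × Equiv.Perm (Fin 3)) →₀ k)
      = Fintype.card (Multiplicative (ZMod (3 ^ r)) × Equiv.Perm (Fin 3)) :=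
    Module.finrank_finsupp_self k
  rw [show Module.finrank k
      (MonoidAlgebra k (Multiplicative (ZMod (3 ^ r)) × Equiv.Perm (Fin 3)))
      = Module.finrank k
      ((Multiplicative (ZMod (3 ^ r)) × Equiv.Perm (Fin 3)) →₀ k) from
        (MonoidAlgebra.coeffLinearEquiv k).finrank_eq, hfr]
  simp [Fintype.card_prod, ZMod.card, Fintype.card_perm]
  rw [show Nat.factorial 3 = 6 from rfl]
  ring
end

section
/- Let k be a field of characteristic p, G a finite group, and M a kG-module such that Hom_{kG}(M, k) is finite dimensional. Then M has a submodule M'' such that M/M'' is finite dimensional, all composition factors of M/M'' are isomorphic to the trivial module k, and Hom_{kG}(M'', k) = 0. -/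
open Submodule

variable (k : Type) [Field k] (G : Type) [Group G]

/-- The augmentation subspace of the monoid algebra, spanned by `g - 1`. -/
noncomputable def Jaug : Submodule k (MonoidAlgebra k G) :=
  span k {a : MonoidAlgebra k G | ∃ g : G, MonoidAlgebra.of k G g - 1 = a}

variable {k G}

set_option linter.unusedVariables false in
lemma Jaug_mul_right {u : MonoidAlgebra k G} (hu : u ∈ Jaug k G)
    (a : MonoidAlgebra k G) : u * a ∈ Jaug k G := by
  induction hu using span_induction with
  | mem x hx =>
    obtain ⟨g, rfl⟩ := hx
    induction a using MonoidAlgebra.induction_on with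
    | of h =>
      have : (MonoidAlgebra.of k G g - 1) * MonoidAlgebra.of k G h
          = (MonoidAlgebra.of k G (g * h) - 1) - (MonoidAlgebra.of k G h - 1) := by
        rw [map_mul, sub_mul, one_mul]; abel
      rw [this]
      exact sub_mem (subset_span ⟨g * h, rfl⟩) (subset_span ⟨h, rfl⟩)
    | add a b ha hb =>
      rw [mul_add]; exact add_mem ha hb
    | smul c a ha =>
      rw [mul_smul_comm]; exact smul_mem _ c ha
  | zero => rw [zero_mul]; exact zero_mem _
  | add x y hx hy ihx ihy => rw [add_mul]; exact add_mem ihx ihy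
  | smul c x hx ih => rw [smul_mul_assoc]; exact smul_mem _ c ih

lemma Jaug_mul_le : Jaug k G * Jaug k G ≤ Jaug k G :=
  Submodule.mul_le.2 fun u hu v _ => Jaug_mul_right hu v

lemma Jaug_pow_antitone (m : ℕ) : Jaug k G ^ (m + 2) ≤ Jaug k G ^ (m + 1) := by
  have h1 : Jaug k G ^ (m + 2) = Jaug k G ^ m * (Jaug k G * Jaug k G) := by
    rw [pow_succ, pow_succ, mul_assoc]
  rw [h1, pow_succ]
  exact mul_le_mul' le_rfl Jaug_mul_le

lemma Jaug_stab [Finite G] : ∃ n : ℕ, Jaug k G * Jaug k G ^ (n + 1) = Jaug k G ^ (n + 1) := by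
  haveI : Module.Finite k (MonoidAlgebra k G) := inferInstance
  suffices h : ∃ n : ℕ, Jaug k G ^ (n + 2) = Jaug k G ^ (n + 1) by
    obtain ⟨n, hn⟩ := h
    exact ⟨n, by rw [← pow_succ']; exact hn⟩
  by_contra h
  push_neg at h
  set d : ℕ → ℕ := fun m => Module.finrank k (Jaug k G ^ (m + 1) : Submodule k (MonoidAlgebra k G)) with hd
  have hlt : ∀ m, d (m + 1) < d m := by
    intro m
    refine lt_of_le_of_ne (Submodule.finrank_mono (Jaug_pow_antitone m)) fun he => ?_
    exact h m (Submodule.eq_of_le_of_finrank_le (Jaug_pow_antitone m) he.ge)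
  have hb : ∀ m, d m + m ≤ d 0 := by
    intro m
    induction m with
    | zero => simp
    | succ m ih => have := hlt m; omega
  have := hb (d 0 + 1); omega

lemma simple_trivial {S : Type} [AddCommGroup S] [Module (MonoidAlgebra k G) S]
    [IsSimpleModule (MonoidAlgebra k G) S] (N : ℕ)
    (hkill : ∀ w ∈ Jaug k G ^ N, ∀ z : S, w • z = (0 : S)) :
    ∀ (g : G) (x : S), MonoidAlgebra.of k G g • x = x := by
  set A := MonoidAlgebra k G
  set DS : Submodule A S :=
    span A {y : S | ∃ (g : G) (z : S), MonoidAlgebra.of k G g • z - z = y} with hDS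
  rcases eq_bot_or_eq_top DS with hD | hD
  · intro g x
    have hx : MonoidAlgebra.of k G g • x - x ∈ DS := subset_span ⟨g, x, rfl⟩
    rw [hD, Submodule.mem_bot] at hx
    exact sub_eq_zero.mp hx
  · exfalso
    set F : ℕ → Submodule A S := fun m =>
      span A {y : S | ∃ w ∈ Jaug k G ^ m, ∃ z : S, w • z = y} with hFdef
    have hF : ∀ m, ∀ y : S, y ∈ F m := by
      intro m
      induction m with
      | zero =>
        intro y
        refine subset_span ⟨1, ?_, y, one_smul _ y⟩
        rw [pow_zero]
        exact Submodule.one_le.mp le_rfl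
      | succ m ih =>
        have key : ∀ y : S, y ∈ F m → ∀ u ∈ Jaug k G, u • y ∈ F (m + 1) := by
          intro y hy
          induction hy using span_induction with
          | mem x hx =>
            obtain ⟨w, hw, z, rfl⟩ := hx
            intro u hu
            rw [smul_smul]
            refine subset_span ⟨u * w, ?_, z, rfl⟩
            rw [pow_succ']
            exact Submodule.mul_mem_mul hu hw
          | zero => intro u hu; rw [smul_zero]; exact zero_mem _
          | add x y hx hy ihx ihy =>
            intro u hu; rw [smul_add]; exact add_mem (ihx u hu) (ihy u hu)
          | smul a x hx ih =>
            intro u hu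
            rw [smul_smul]
            exact ih (u * a) (Jaug_mul_right hu a)
        intro y
        have hyD : y ∈ DS := by rw [hD]; exact Submodule.mem_top
        refine (span_le.mpr ?_ : DS ≤ F (m + 1)) hyD
        rintro _ ⟨g', z, rfl⟩
        have h1 : (MonoidAlgebra.of k G g' - 1) • z ∈ F (m + 1) :=
          key z (ih z) _ (subset_span ⟨g', rfl⟩)
        rwa [sub_smul, one_smul] at h1
    have hbot : F N ≤ ⊥ := by
      rw [hFdef]
      refine span_le.mpr ?_
      rintro _ ⟨w, hw, z, rfl⟩
      rw [SetLike.mem_coe, Submodule.mem_bot]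
      exact hkill w hw z
    have htop : (⊥ : Submodule A S) = ⊤ := by
      rw [eq_top_iff]
      exact fun y _ => hbot (hF N y)
    exact bot_ne_top htop


lemma hom_vanish {M : Type} [AddCommGroup M] [Module k M]
    [Module (MonoidAlgebra k G) M] [IsScalarTower k (MonoidAlgebra k G) M]
    (𝔍 : Submodule k (MonoidAlgebra k G)) (h𝔍 : Jaug k G * 𝔍 = 𝔍)
    (M'' : Submodule (MonoidAlgebra k G) M)
    (hM'' : M'' = span (MonoidAlgebra k G) {x : M | ∃ w ∈ 𝔍, ∃ m : M, w • m = x})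
    (f : ↥M'' →ₗ[k] k)
    (hf : ∀ (g : G) (x : ↥M''), f (MonoidAlgebra.of k G g • x) = f x) : f = 0 := by
  have hfJ : ∀ u ∈ Jaug k G, ∀ x : ↥M'', f (u • x) = 0 := by
    intro u hu
    induction hu using span_induction with
    | mem a ha =>
      obtain ⟨g, rfl⟩ := ha
      intro x
      have h1 : (MonoidAlgebra.of k G g - 1) • x = MonoidAlgebra.of k G g • x - x := by
        apply Subtype.ext
        simp [sub_smul]
      rw [h1, map_sub, hf g x, sub_self]
    | zero => intro x; rw [zero_smul, map_zero]
    | add a b ha hb iha ihb =>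
      intro x; rw [add_smul, map_add, iha x, ihb x, add_zero]
    | smul c a ha ih =>
      intro x
      rw [smul_assoc, map_smul, ih x, smul_zero]
  have hA0 : ∀ (a : MonoidAlgebra k G) (x : ↥M''), f x = 0 → f (a • x) = 0 := by
    intro a
    induction a using MonoidAlgebra.induction_on with
    | of g => intro x hx; rw [hf g x]; exact hx
    | add a b ha hb => intro x hx; rw [add_smul, map_add, ha x hx, hb x hx, add_zero]
    | smul c a ha =>
      intro x hx
      rw [smul_assoc, map_smul, ha x hx, smul_zero]
  have key : ∀ w' ∈ Jaug k G * 𝔍, ∀ m : M,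
      ∃ h : w' • m ∈ M'', f ⟨w' • m, h⟩ = 0 := by
    intro w' hw'
    refine Submodule.mul_induction_on
      (C := fun w' => ∀ m : M, ∃ h : w' • m ∈ M'', f ⟨w' • m, h⟩ = 0) hw' ?_ ?_
    · intro u hu v hv m
      have hvm : v • m ∈ M'' := by
        rw [hM'']; exact subset_span ⟨v, hv, m, rfl⟩
      have hmem : (u * v) • m ∈ M'' := by
        rw [mul_smul]; exact M''.smul_mem u hvm
      refine ⟨hmem, ?_⟩
      have h2 : (⟨(u * v) • m, hmem⟩ : ↥M'') = u • (⟨v • m, hvm⟩ : ↥M'') := by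
        apply Subtype.ext
        simp [mul_smul]
      rw [h2]
      exact hfJ u hu _
    · intro a b iha ihb m
      obtain ⟨h1, e1⟩ := iha m
      obtain ⟨h2, e2⟩ := ihb m
      have hmem : (a + b) • m ∈ M'' := by
        rw [add_smul]; exact add_mem h1 h2
      refine ⟨hmem, ?_⟩
      have h3 : (⟨(a + b) • m, hmem⟩ : ↥M'')
          = (⟨a • m, h1⟩ : ↥M'') + (⟨b • m, h2⟩ : ↥M'') := by
        apply Subtype.ext; simp [add_smul]
      rw [h3, map_add, e1, e2, add_zero]
  have main : ∀ x (_ : x ∈ span (MonoidAlgebra k G) {x : M | ∃ w ∈ 𝔍, ∃ m : M, w • m = x}),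
      ∀ h : x ∈ M'', f ⟨x, h⟩ = 0 := by
    intro x hx
    induction hx using span_induction with
    | mem y hy =>
      obtain ⟨w, hw, m, rfl⟩ := hy
      rw [← h𝔍] at hw
      intro h
      obtain ⟨h', e'⟩ := key w hw m
      exact e'
    | zero =>
      intro h
      have h0 : (⟨(0 : M), h⟩ : ↥M'') = 0 := rfl
      rw [h0, map_zero]
    | add y z hy hz ihy ihz =>
      intro h
      have hy' : y ∈ M'' := by rw [hM'']; exact hy
      have hz' : z ∈ M'' := by rw [hM'']; exact hz
      have h3 : (⟨y + z, h⟩ : ↥M'') = (⟨y, hy'⟩ : ↥M'') + (⟨z, hz'⟩ : ↥M'') := rfl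
      rw [h3, map_add, ihy hy', ihz hz', add_zero]
    | smul a y hy ih =>
      intro h
      have hy' : y ∈ M'' := by rw [hM'']; exact hy
      have h3 : (⟨a • y, h⟩ : ↥M'') = a • (⟨y, hy'⟩ : ↥M'') := rfl
      rw [h3]
      exact hA0 a _ (ih hy')
  ext ⟨x, hx⟩
  rw [LinearMap.zero_apply]
  exact main x (by rw [← hM'']; exact hx) hx

lemma quot_findim [Finite G] {M : Type} [AddCommGroup M] [Module k M]
    [Module (MonoidAlgebra k G) M] [IsScalarTower k (MonoidAlgebra k G) M]
    (s : Finset (M →ₗ[k] k))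
    (hs : ∀ f : M →ₗ[k] k,
      (∀ (g : G) (m : M), f (MonoidAlgebra.of k G g • m) = f m) →
      f ∈ Submodule.span k (s : Set (M →ₗ[k] k)))
    (n : ℕ) (M'' : Submodule (MonoidAlgebra k G) M)
    (hM'' : M'' = span (MonoidAlgebra k G)
      {x : M | ∃ w ∈ Jaug k G ^ (n + 1), ∃ m : M, w • m = x}) :
    FiniteDimensional k (M ⧸ M''.restrictScalars k) := by
  classical
  set Nk : ℕ → Submodule k M := fun i =>
    span k {x : M | ∃ w ∈ Jaug k G ^ (i + 1), ∃ m : M, w • m = x} with hNk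
  haveI hVfd : FiniteDimensional k (M ⧸ Nk 0) := by
    set π := (Nk 0).mkQ with hπ
    have hrange : ∀ φ : Module.Dual k (M ⧸ Nk 0),
        π.dualMap φ ∈ span k (s : Set (M →ₗ[k] k)) := by
      intro φ
      apply hs
      intro g m
      have hker : MonoidAlgebra.of k G g • m - m ∈ Nk 0 := by
        refine subset_span ⟨MonoidAlgebra.of k G g - 1, ?_, m, ?_⟩
        · rw [zero_add, pow_one]; exact subset_span ⟨g, rfl⟩
        · rw [sub_smul, one_smul]
      have hπ0 : π (MonoidAlgebra.of k G g • m) = π m := by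
        have : π (MonoidAlgebra.of k G g • m - m) = 0 := by
          rw [hπ, Submodule.mkQ_apply, Submodule.Quotient.mk_eq_zero]
          exact hker
        rw [map_sub, sub_eq_zero] at this
        exact this
      simp only [LinearMap.dualMap_apply, LinearMap.comp_apply]
      rw [hπ0]
    haveI : FiniteDimensional k ↥(span k (s : Set (M →ₗ[k] k))) :=
      FiniteDimensional.span_of_finite k s.finite_toSet
    have hinj : Function.Injective
        (π.dualMap.codRestrict (span k (s : Set (M →ₗ[k] k))) hrange) := by
      intro φ ψ h
      have h' : π.dualMap φ = π.dualMap ψ := congrArg Subtype.val h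
      ext v
      have h2 := congrArg (fun (θ : Module.Dual k M) => θ v) h'
      simp only [LinearMap.dualMap_apply, LinearMap.comp_apply] at h2
      exact h2
    haveI : FiniteDimensional k (Module.Dual k (M ⧸ Nk 0)) :=
      @FiniteDimensional.of_injective k _ _ _ _ (span k (s : Set (M →ₗ[k] k))) (span k (s : Set (M →ₗ[k] k))).addCommGroup (span k (s : Set (M →ₗ[k] k))).module _ hinj _
    exact (Module.finite_dual_iff k).mp this
  obtain ⟨tv, htv⟩ : (⊤ : Submodule k (M ⧸ Nk 0)).FG := hVfd.fg_top
  choose lift hlift using Submodule.mkQ_surjective (Nk 0)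
  set t : Set M := lift '' ↑tv with ht
  have htfin : t.Finite := tv.finite_toSet.image _
  set E : Submodule (MonoidAlgebra k G) M := span (MonoidAlgebra k G) t with hE
  have hbase : ∀ x : M, x ∈ E.restrictScalars k ⊔ Nk 0 := by
    intro x
    have h2 : Submodule.map (Nk 0).mkQ (span k t) = ⊤ := by
      rw [Submodule.map_span]
      have h3 : (Nk 0).mkQ '' t = ↑tv := by
        ext v
        constructor
        · rintro ⟨m, ⟨v', hv', rfl⟩, rfl⟩
          rw [hlift v']; exact hv'
        · intro hv; exact ⟨lift v, ⟨v, hv, rfl⟩, hlift v⟩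
      rw [h3, htv]
    have h1 : span k t ⊔ Nk 0 = ⊤ := by
      have := Submodule.comap_map_eq (Nk 0).mkQ (span k t)
      rw [Submodule.ker_mkQ, h2, Submodule.comap_top] at this
      exact this.symm
    have h4 : span k t ≤ E.restrictScalars k :=
      span_le.mpr fun y hy => subset_span hy
    have h5 : x ∈ span k t ⊔ Nk 0 := h1 ▸ Submodule.mem_top
    exact sup_le_sup_right h4 (Nk 0) h5
  have hstep2 : ∀ i, ∀ u ∈ Jaug k G, ∀ y ∈ Nk i, u • y ∈ Nk (i + 1) := by
    intro i u hu y hy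
    induction hy using span_induction with
    | mem x hx =>
      obtain ⟨w, hw, m, rfl⟩ := hx
      rw [smul_smul]
      refine subset_span ⟨u * w, ?_, m, rfl⟩
      rw [pow_succ']
      exact Submodule.mul_mem_mul hu hw
    | zero => rw [smul_zero]; exact zero_mem _
    | add x y hx hy ihx ihy => rw [smul_add]; exact add_mem ihx ihy
    | smul c x hx ih =>
      rw [smul_comm u c x]
      exact Submodule.smul_mem _ c ih
  have hchain : ∀ i, ∀ x : M, x ∈ E.restrictScalars k ⊔ Nk i := by
    intro i
    induction i with
    | zero => exact hbase
    | succ i ih =>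
      intro x
      obtain ⟨e, he, y, hy, rfl⟩ := Submodule.mem_sup.mp (hbase x)
      refine add_mem (Submodule.mem_sup_left he) ?_
      induction hy using span_induction with
      | mem z hz =>
        obtain ⟨u, hu, m, rfl⟩ := hz
        have hu' : u ∈ Jaug k G := by rwa [zero_add, pow_one] at hu
        obtain ⟨e', he', y', hy', hm⟩ := Submodule.mem_sup.mp (ih m)
        rw [← hm, smul_add]
        refine add_mem (Submodule.mem_sup_left ?_) (Submodule.mem_sup_right ?_)
        · exact E.smul_mem u he'
        · exact hstep2 i u hu' y' hy'
      | zero => exact zero_mem _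
      | add z w hz hw ihz ihw => exact add_mem ihz ihw
      | smul c z hz ihz => exact Submodule.smul_mem _ c ihz
  have hNle : Nk n ≤ M''.restrictScalars k := by
    rw [hM'']
    exact span_le.mpr fun x hx => subset_span hx
  haveI hEfinA : Module.Finite (MonoidAlgebra k G) ↥E :=
    Module.Finite.span_of_finite _ htfin
  haveI hAfin : Module.Finite k (MonoidAlgebra k G) := inferInstance
  haveI hEfin : Module.Finite k ↥E := Module.Finite.trans (MonoidAlgebra k G) ↥E
  set F : ↥E →ₗ[k] (M ⧸ M''.restrictScalars k) :=
    (M''.restrictScalars k).mkQ.comp (E.subtype.restrictScalars k) with hF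
  have hsurj : Function.Surjective F := by
    intro z
    obtain ⟨x, rfl⟩ := Submodule.mkQ_surjective _ z
    obtain ⟨e, he, y, hy, hx⟩ := Submodule.mem_sup.mp (hchain n x)
    refine ⟨⟨e, he⟩, ?_⟩
    have hy0 : (M''.restrictScalars k).mkQ y = 0 := by
      rw [Submodule.mkQ_apply, Submodule.Quotient.mk_eq_zero]
      exact hNle hy
    rw [hF]
    simp only [LinearMap.comp_apply, LinearMap.restrictScalars_apply, Submodule.subtype_apply]
    rw [← hx]
    rw [map_add, hy0, add_zero]
  exact Module.Finite.of_surjective F hsurj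

/-- Let `k` be a field of characteristic `p`, `G` a finite group, and `M` a
`kG`-module such that `Hom_{kG}(M, k)` (the space of `G`-equivariant linear functionals,
`k` the trivial module) is finite dimensional (encoded: all such functionals lie in the
span of finitely many).  Then `M` has a `kG`-submodule `M''` such that `M/M''` is finite
dimensional, all composition factors of `M/M''` (simple subquotients `Q/P` with
`M'' ≤ P ≤ Q ≤ M`) carry the trivial `G`-action (are isomorphic to `k`), and
`Hom_{kG}(M'', k) = 0`. -/
theorem stmt18 (k : Type) [Field k] (p : ℕ) [Fact p.Prime] [CharP k p]
    (G : Type) [Group G] [Finite G]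
    (M : Type) [AddCommGroup M] [Module k M] [Module (MonoidAlgebra k G) M]
    [IsScalarTower k (MonoidAlgebra k G) M]
    (hfin : ∃ s : Finset (M →ₗ[k] k), ∀ f : M →ₗ[k] k,
      (∀ (g : G) (m : M), f (MonoidAlgebra.of k G g • m) = f m) →
      f ∈ Submodule.span k (s : Set (M →ₗ[k] k))) :
    ∃ M'' : Submodule (MonoidAlgebra k G) M,
      FiniteDimensional k (M ⧸ M''.restrictScalars k) ∧
      (∀ (P Q : Submodule (MonoidAlgebra k G) M), M'' ≤ P → P ≤ Q →
        IsSimpleModule (MonoidAlgebra k G) (↥Q ⧸ P.comap Q.subtype) →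
        ∀ (g : G) (x : ↥Q ⧸ P.comap Q.subtype), MonoidAlgebra.of k G g • x = x) ∧
      (∀ f : ↥M'' →ₗ[k] k,
        (∀ (g : G) (x : ↥M''), f (MonoidAlgebra.of k G g • x) = f x) → f = 0) := by
  obtain ⟨s, hs⟩ := hfin
  obtain ⟨n, hstab⟩ := Jaug_stab (k := k) (G := G)
  refine ⟨span (MonoidAlgebra k G)
      {x : M | ∃ w ∈ Jaug k G ^ (n + 1), ∃ m : M, w • m = x}, ?_, ?_, ?_⟩
  · exact quot_findim s hs n _ rfl
  · intro P Q hMP hPQ hsimp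
    haveI := hsimp
    refine simple_trivial (n + 1) ?_
    intro w hw z
    obtain ⟨q, rfl⟩ := Submodule.Quotient.mk_surjective _ z
    rw [← Submodule.Quotient.mk_smul, Submodule.Quotient.mk_eq_zero]
    rw [Submodule.mem_comap]
    have hcoe : Q.subtype (w • q) = w • (q : M) := rfl
    rw [hcoe]
    exact hMP (subset_span ⟨w, hw, (q : M), rfl⟩)
  · intro f hf
    exact hom_vanish (Jaug k G ^ (n + 1)) hstab _ rfl f hf
end
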